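/- Let L be an n×n non-negative integer matrix with zero diagonal. Then there exist positive integer vectors d, r in ℕ₊ⁿ with (Diag(d) − L)·rᵗ = 0 and gcd(r₁,…,rₙ) = 1 if and only if L has no row with all entries equal to zero. -/
import Mathlib


/-- arithmetical structures exist iff no zero row. -/
theorem stmt_0 (n : ℕ) (hn : 0 < n) (L : Matrix (Fin n) (Fin n) ℤ)
    (hL : ∀ i j, 0 ≤ L i j) (hdiag : ∀ i, L i i = 0) :
    (∃ d r : Fin n → ℤ, (∀ i, 0 < d i) ∧ (∀ i, 0 < r i) ∧
      (Matrix.diagonal d - L).mulVec r = 0 ∧ Finset.univ.gcd r = 1) ↔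
    (∀ i, ∃ j, L i j ≠ 0) := by
  constructor
  · rintro ⟨d, r, hd, hr, heq, -⟩ i
    by_contra h
    push_neg at h
    have h0 := congrFun heq i
    rw [Matrix.sub_mulVec] at h0
    simp only [Pi.sub_apply, Matrix.mulVec_diagonal, Pi.zero_apply] at h0
    simp only [Matrix.mulVec, dotProduct, h, zero_mul, Finset.sum_const_zero,
      sub_zero] at h0
    exact absurd h0 (mul_pos (hd i) (hr i)).ne'
  · intro h
    refine ⟨fun i => ∑ j, L i j, fun _ => 1, fun i => ?_, fun _ => one_pos, ?_, ?_⟩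
    · obtain ⟨j, hj⟩ := h i
      have hpos : 0 < L i j := lt_of_le_of_ne (hL i j) (Ne.symm hj)
      exact Finset.sum_pos' (fun k _ => hL i k) ⟨j, Finset.mem_univ j, hpos⟩
    · funext i
      rw [Matrix.sub_mulVec]
      simp only [Pi.sub_apply, Matrix.mulVec_diagonal, Pi.zero_apply]
      simp only [Matrix.mulVec, dotProduct, mul_one, sub_self]
    · have hd1 : Finset.univ.gcd (fun _ : Fin n => (1:ℤ)) ∣ 1 :=
        Finset.gcd_dvd (Finset.mem_univ ⟨0, hn⟩)
      rw [← Finset.normalize_gcd]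
      exact normalize_eq_one.mpr (isUnit_of_dvd_one hd1)
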